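/- Let μ ∈ P₂(ℝ^d) and let G(α̃) = Var(α̃⋆μ)(V) + λ̄ᵀWλ̄ + 2∫(x−μ̄)ᵀS α̃(x) μ(dx) + 2μ̄ᵀTλ̄ + ρᵀ(C+C̄)λ̄ be defined on L²(μ; ℝ^m), where λ̄ := ∫α̃ dμ, and V, W are symmetric positive definite m×m matrices. Then G attains its minimum at α̃*(x) = −V⁻¹Sᵀ(x−μ̄) − W⁻¹Tᵀμ̄ − ½W⁻¹(C+C̄)ᵀρ, and the minimal value is G(α̃*) = −Var(μ)(S V⁻¹ Sᵀ) − μ̄ᵀ(T W⁻¹ Tᵀ)μ̄ − μ̄ᵀT W⁻¹(C+C̄)ᵀρ − ¼ρᵀ(C+C̄)W⁻¹(C+C̄)ᵀρ. -/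

import Mathlib

open MeasureTheory Matrix

/-- The `Λ`-weighted variance `Var(ν)(Λ) = ∫ yᵀΛy ν(dy) − ν̄ᵀΛν̄` of a measure on `ℝ^k`. -/
noncomputable def quadVar {k : ℕ} (ν : Measure (Fin k → ℝ)) (Λ : Matrix (Fin k) (Fin k) ℝ) : ℝ :=
  (∫ y, y ⬝ᵥ Λ.mulVec y ∂ν) - (∫ y, y ∂ν) ⬝ᵥ Λ.mulVec (∫ y, y ∂ν)

/-- The quadratic functional
`G(α̃) = Var(α̃⋆μ)(V) + λ̄ᵀWλ̄ + 2∫(x−μ̄)ᵀS α̃(x) μ(dx) + 2μ̄ᵀTλ̄ + ρᵀ(C+C̄)λ̄`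
on `L²(μ;ℝ^m)`, where `λ̄ = ∫ α̃ dμ` and `μ̄ = ∫ x μ(dx)`. -/
noncomputable def Gfun {d m : ℕ} (μ : Measure (Fin d → ℝ))
    (V W : Matrix (Fin m) (Fin m) ℝ) (S T C Cb : Matrix (Fin d) (Fin m) ℝ) (ρ : Fin d → ℝ)
    (α : (Fin d → ℝ) → Fin m → ℝ) : ℝ :=
  quadVar (μ.map α) V
    + (∫ x, α x ∂μ) ⬝ᵥ W.mulVec (∫ x, α x ∂μ)
    + 2 * ∫ x, (x - ∫ y, y ∂μ) ⬝ᵥ S.mulVec (α x) ∂μ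
    + 2 * ((∫ y, y ∂μ) ⬝ᵥ T.mulVec (∫ x, α x ∂μ))
    + ρ ⬝ᵥ (C + Cb).mulVec (∫ x, α x ∂μ)

section aux
variable {X : Type*} [MeasurableSpace X] {μ : Measure X} {k l : ℕ}

lemma dot_trans (M : Matrix (Fin k) (Fin l) ℝ) (u : Fin k → ℝ) (v : Fin l → ℝ) :
    u ⬝ᵥ M.mulVec v = Mᵀ.mulVec u ⬝ᵥ v := by
  rw [Matrix.dotProduct_mulVec, Matrix.mulVec_transpose]

lemma memL2_coord {f : X → Fin k → ℝ} (hf : MemLp f 2 μ) (i : Fin k) :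
    MemLp (fun x => f x i) 2 μ :=
  hf.of_le ((continuous_apply i).comp_aestronglyMeasurable hf.1)
    (Filter.Eventually.of_forall fun x => by
      simpa using norm_le_pi_norm (f x) i)

lemma integrable_dot (M : Matrix (Fin k) (Fin l) ℝ) {f : X → Fin k → ℝ} {g : X → Fin l → ℝ}
    (hf : MemLp f 2 μ) (hg : MemLp g 2 μ) :
    Integrable (fun x => f x ⬝ᵥ M.mulVec (g x)) μ := by
  have heq : (fun x => f x ⬝ᵥ M.mulVec (g x))
      = fun x => ∑ i, ∑ j, M i j * (f x i * g x j) := by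
    funext x
    simp only [dotProduct, mulVec, Finset.mul_sum]
    exact Finset.sum_congr rfl fun i _ => Finset.sum_congr rfl fun j _ => by ring
  rw [heq]
  refine integrable_finset_sum _ fun i _ => integrable_finset_sum _ fun j _ => ?_
  have h1 : MemLp ((fun x => f x i) • (fun x => g x j)) 1 μ := by
    exact (memL2_coord hg j).smul (memL2_coord hf i)
      (hpqr := ⟨by rw [inv_one]; exact ENNReal.inv_two_add_inv_two⟩)
  have := (memLp_one_iff_integrable.mp h1).const_mul (M i j)
  simpa [Pi.smul_apply, smul_eq_mul, mul_assoc] using this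

lemma integral_dot_const (b : Fin k → ℝ) {f : X → Fin k → ℝ} (hf : Integrable f μ) :
    ∫ x, b ⬝ᵥ f x ∂μ = b ⬝ᵥ ∫ x, f x ∂μ := by
  let L0 : (Fin k → ℝ) →ₗ[ℝ] ℝ :=
    { toFun := fun v => b ⬝ᵥ v
      map_add' := fun u v => dotProduct_add b u v
      map_smul' := fun c v => by simp [dotProduct_smul] }
  have := (LinearMap.toContinuousLinearMap L0).integral_comp_comm hf
  simpa [L0] using this

lemma integrable_dot_const (b : Fin k → ℝ) {f : X → Fin k → ℝ} (hf : Integrable f μ) :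
    Integrable (fun x => b ⬝ᵥ f x) μ := by
  let L0 : (Fin k → ℝ) →ₗ[ℝ] ℝ :=
    { toFun := fun v => b ⬝ᵥ v
      map_add' := fun u v => dotProduct_add b u v
      map_smul' := fun c v => by simp [dotProduct_smul] }
  have := (LinearMap.toContinuousLinearMap L0).integrable_comp hf
  simpa [L0] using this

lemma integral_mulVec_comm (M : Matrix (Fin k) (Fin l) ℝ) {f : X → Fin l → ℝ}
    (hf : Integrable f μ) :
    ∫ x, M.mulVec (f x) ∂μ = M.mulVec (∫ x, f x ∂μ) := by
  have := (LinearMap.toContinuousLinearMap M.mulVecLin).integral_comp_comm hf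
  simpa using this

lemma memL2_of_lintegral {f : X → Fin k → ℝ} (hm : AEStronglyMeasurable f μ)
    (h2 : ∫⁻ x, (‖f x‖₊ : ENNReal) ^ 2 ∂μ < ⊤) : MemLp f 2 μ := by
  refine ⟨hm, ?_⟩
  rw [eLpNorm_lt_top_iff_lintegral_rpow_enorm_lt_top (by norm_num) (by norm_num)]
  simpa [ENNReal.rpow_natCast, ENNReal.toReal_ofNat, enorm_eq_nnnorm] using h2

lemma continuous_quadform (V : Matrix (Fin k) (Fin k) ℝ) :
    Continuous fun y : Fin k → ℝ => y ⬝ᵥ V.mulVec y := by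
  simp only [dotProduct, mulVec]
  refine continuous_finset_sum _ fun i _ => ((continuous_apply i).mul ?_)
  exact continuous_finset_sum _ fun j _ => continuous_const.mul (continuous_apply j)

lemma quad_expand {V : Matrix (Fin k) (Fin k) ℝ} (hV : V.PosDef) (b v : Fin k → ℝ) :
    (v + V⁻¹.mulVec b) ⬝ᵥ V.mulVec (v + V⁻¹.mulVec b)
      = v ⬝ᵥ V.mulVec v + 2 * (b ⬝ᵥ v) + b ⬝ᵥ V⁻¹.mulVec b := by
  have hdet : IsUnit V.det := (Matrix.isUnit_iff_isUnit_det V).mp hV.isUnit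
  have hVV : V * V⁻¹ = 1 := Matrix.mul_nonsing_inv V hdet
  have hVsym : Vᵀ = V := by
    have := hV.1.eq; rwa [Matrix.conjTranspose_eq_transpose_of_trivial] at this
  have h1 : V.mulVec (V⁻¹.mulVec b) = b := by
    rw [Matrix.mulVec_mulVec, hVV, Matrix.one_mulVec]
  have h2 : V⁻¹.mulVec b ⬝ᵥ V.mulVec v = b ⬝ᵥ v := by
    rw [dot_trans, hVsym, Matrix.mulVec_mulVec, hVV, Matrix.one_mulVec]
  have h3 : v ⬝ᵥ b = b ⬝ᵥ v := dotProduct_comm v b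
  have h4 : V⁻¹.mulVec b ⬝ᵥ b = b ⬝ᵥ V⁻¹.mulVec b := dotProduct_comm _ b
  rw [Matrix.mulVec_add, dotProduct_add, add_dotProduct, add_dotProduct, h1, h2, h3, h4]
  ring

lemma quad_lower {V : Matrix (Fin k) (Fin k) ℝ} (hV : V.PosDef) (b v : Fin k → ℝ) :
    -(b ⬝ᵥ V⁻¹.mulVec b) ≤ v ⬝ᵥ V.mulVec v + 2 * (b ⬝ᵥ v) := by
  have h0 : 0 ≤ (v + V⁻¹.mulVec b) ⬝ᵥ V.mulVec (v + V⁻¹.mulVec b) := by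
    have := hV.posSemidef.re_dotProduct_nonneg (v + V⁻¹.mulVec b)
    simpa using this
  rw [quad_expand hV] at h0
  linarith

lemma quad_eq {V : Matrix (Fin k) (Fin k) ℝ} (hV : V.PosDef) (b : Fin k → ℝ) :
    (-(V⁻¹.mulVec b)) ⬝ᵥ V.mulVec (-(V⁻¹.mulVec b)) + 2 * (b ⬝ᵥ (-(V⁻¹.mulVec b)))
      = -(b ⬝ᵥ V⁻¹.mulVec b) := by
  have h := quad_expand hV b (-(V⁻¹.mulVec b))
  simp only [neg_add_cancel] at h
  have h0 : (0 : Fin k → ℝ) ⬝ᵥ V.mulVec 0 = 0 := by simp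
  rw [h0] at h
  linarith

lemma dot_sandwich {a b c : ℕ} (M : Matrix (Fin a) (Fin b) ℝ) (N : Matrix (Fin b) (Fin b) ℝ)
    (P : Matrix (Fin c) (Fin b) ℝ) (u : Fin a → ℝ) (w : Fin c → ℝ) :
    Mᵀ.mulVec u ⬝ᵥ N.mulVec (Pᵀ.mulVec w) = u ⬝ᵥ (M * N * Pᵀ).mulVec w := by
  rw [← dot_trans, Matrix.mulVec_mulVec, Matrix.mulVec_mulVec, Matrix.mul_assoc]

end aux

lemma Gfun_decomp {d m : ℕ} (μ : Measure (Fin d → ℝ)) [IsProbabilityMeasure μ]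
    (hx2 : MemLp (fun x : Fin d → ℝ => x) 2 μ)
    (V W : Matrix (Fin m) (Fin m) ℝ) (S T C Cb : Matrix (Fin d) (Fin m) ℝ) (ρ : Fin d → ℝ)
    {α : (Fin d → ℝ) → Fin m → ℝ} (hαm : Measurable α) (hα2 : MemLp α 2 μ) :
    Gfun μ V W S T C Cb ρ α
      = (∫ x, ((α x - ∫ y, α y ∂μ) ⬝ᵥ V.mulVec (α x - ∫ y, α y ∂μ)
            + 2 * (Sᵀ.mulVec (x - ∫ y, y ∂μ) ⬝ᵥ (α x - ∫ y, α y ∂μ))) ∂μ)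
        + ((∫ y, α y ∂μ) ⬝ᵥ W.mulVec (∫ y, α y ∂μ)
            + 2 * ((Tᵀ.mulVec (∫ y, y ∂μ) + (1/2 : ℝ) • ((C + Cb)ᵀ.mulVec ρ))
                ⬝ᵥ (∫ y, α y ∂μ))) := by
  set lam := ∫ y, α y ∂μ with hlam
  set mb := ∫ y, (y : Fin d → ℝ) ∂μ with hmb
  have hα1 : Integrable α μ := hα2.integrable one_le_two
  have hid1 : Integrable (fun x : Fin d → ℝ => x) μ := hx2.integrable one_le_two
  have hxc : MemLp (fun x : Fin d → ℝ => x - mb) 2 μ := hx2.sub (memLp_const mb)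
  have hxc1 : Integrable (fun x : Fin d → ℝ => x - mb) μ := hxc.integrable one_le_two
  have h0 : ∫ x, (x - mb) ∂μ = 0 := by
    rw [integral_sub hid1 (integrable_const mb)]
    simp [hmb]
  -- change of variables for the pushforward
  have hmap1 : ∫ y, y ⬝ᵥ V.mulVec y ∂(μ.map α) = ∫ x, α x ⬝ᵥ V.mulVec (α x) ∂μ :=
    integral_map hαm.aemeasurable (continuous_quadform V).aestronglyMeasurable
  have hmap2 : ∫ y, y ∂(μ.map α) = lam :=
    integral_map hαm.aemeasurable aestronglyMeasurable_id
  -- pointwise expansion of the centered integrand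
  have hpt : (fun x => (α x - lam) ⬝ᵥ V.mulVec (α x - lam)
        + 2 * (Sᵀ.mulVec (x - mb) ⬝ᵥ (α x - lam)))
      = fun x => (α x ⬝ᵥ V.mulVec (α x) - (V.mulVec lam) ⬝ᵥ α x - (Vᵀ.mulVec lam) ⬝ᵥ α x
            + lam ⬝ᵥ V.mulVec lam)
          + (2 * ((x - mb) ⬝ᵥ S.mulVec (α x)) - 2 * ((S.mulVec lam) ⬝ᵥ (x - mb))) := by
    funext x
    have e1 : α x ⬝ᵥ V.mulVec lam = (V.mulVec lam) ⬝ᵥ α x := dotProduct_comm _ _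
    have e2 : lam ⬝ᵥ V.mulVec (α x) = (Vᵀ.mulVec lam) ⬝ᵥ α x := dot_trans V lam (α x)
    have e3 : Sᵀ.mulVec (x - mb) ⬝ᵥ α x = (x - mb) ⬝ᵥ S.mulVec (α x) :=
      (dot_trans S (x - mb) (α x)).symm
    have e4 : Sᵀ.mulVec (x - mb) ⬝ᵥ lam = (S.mulVec lam) ⬝ᵥ (x - mb) := by
      rw [← dot_trans]; exact dotProduct_comm _ _
    rw [Matrix.mulVec_sub, dotProduct_sub, sub_dotProduct, sub_dotProduct, dotProduct_sub,
      e1, e2, e3, e4]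
    ring
  -- integrability of the pieces
  have I1 : Integrable (fun x => α x ⬝ᵥ V.mulVec (α x)) μ := integrable_dot V hα2 hα2
  have I2 : Integrable (fun x => (V.mulVec lam) ⬝ᵥ α x) μ := integrable_dot_const _ hα1
  have I3 : Integrable (fun x => (Vᵀ.mulVec lam) ⬝ᵥ α x) μ := integrable_dot_const _ hα1
  have I5 : Integrable (fun x => (x - mb) ⬝ᵥ S.mulVec (α x)) μ := integrable_dot S hxc hα2
  have I6 : Integrable (fun x => (S.mulVec lam) ⬝ᵥ (x - mb)) μ := integrable_dot_const _ hxc1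
  -- value of the centered integral
  have key : ∫ x, ((α x - lam) ⬝ᵥ V.mulVec (α x - lam)
        + 2 * (Sᵀ.mulVec (x - mb) ⬝ᵥ (α x - lam))) ∂μ
      = (∫ x, α x ⬝ᵥ V.mulVec (α x) ∂μ) - lam ⬝ᵥ V.mulVec lam
        + 2 * ∫ x, (x - mb) ⬝ᵥ S.mulVec (α x) ∂μ := by
    rw [hpt]
    have Ia1 : Integrable (fun x => α x ⬝ᵥ V.mulVec (α x) - (V.mulVec lam) ⬝ᵥ α x) μ := I1.sub I2
    have Ia2 : Integrable (fun x => α x ⬝ᵥ V.mulVec (α x) - (V.mulVec lam) ⬝ᵥ α x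
        - (Vᵀ.mulVec lam) ⬝ᵥ α x) μ := Ia1.sub I3
    have Ia : Integrable (fun x => α x ⬝ᵥ V.mulVec (α x) - (V.mulVec lam) ⬝ᵥ α x
        - (Vᵀ.mulVec lam) ⬝ᵥ α x + lam ⬝ᵥ V.mulVec lam) μ :=
      Ia2.add (integrable_const _)
    have Ib1 : Integrable (fun x => 2 * ((x - mb) ⬝ᵥ S.mulVec (α x))) μ := I5.const_mul 2
    have Ib2 : Integrable (fun x => 2 * ((S.mulVec lam) ⬝ᵥ (x - mb))) μ := I6.const_mul 2
    have Ib : Integrable (fun x => 2 * ((x - mb) ⬝ᵥ S.mulVec (α x))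
        - 2 * ((S.mulVec lam) ⬝ᵥ (x - mb))) μ := Ib1.sub Ib2
    rw [integral_add Ia Ib, integral_add Ia2 (integrable_const (lam ⬝ᵥ V.mulVec lam)),
      integral_sub Ia1 I3, integral_sub I1 I2,
      integral_sub Ib1 Ib2, integral_const_mul, integral_const_mul,
      integral_dot_const _ hα1, integral_dot_const _ hα1, integral_dot_const _ hxc1,
      h0]
    have e5 : (V.mulVec lam) ⬝ᵥ lam = lam ⬝ᵥ V.mulVec lam := dotProduct_comm _ _
    have e6 : (Vᵀ.mulVec lam) ⬝ᵥ lam = lam ⬝ᵥ V.mulVec lam := (dot_trans V lam lam).symm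
    rw [e5, e6]
    simp only [dotProduct_zero, integral_const, measure_univ, probReal_univ, ENNReal.toReal_one, one_smul]
    ring
  -- assemble
  unfold Gfun quadVar
  rw [hmap1, hmap2, key]
  have e7 : mb ⬝ᵥ T.mulVec lam = (Tᵀ.mulVec mb) ⬝ᵥ lam := dot_trans T mb lam
  have e8 : ρ ⬝ᵥ (C + Cb).mulVec lam = ((C + Cb)ᵀ.mulVec ρ) ⬝ᵥ lam := dot_trans _ ρ lam
  rw [add_dotProduct, smul_dotProduct, ← hlam, ← hmb, e7, e8]
  simp only [smul_eq_mul]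
  ring


/-- Minimization of the quadratic functional `G` on `L²(μ;ℝ^m)`: for `V`, `W` symmetric positive
definite, `G` attains its minimum at
`α̃*(x) = −V⁻¹Sᵀ(x−μ̄) − W⁻¹Tᵀμ̄ − ½W⁻¹(C+C̄)ᵀρ`, with minimal value
`G(α̃*) = −Var(μ)(SV⁻¹Sᵀ) − μ̄ᵀTW⁻¹Tᵀμ̄ − μ̄ᵀTW⁻¹(C+C̄)ᵀρ − ¼ρᵀ(C+C̄)W⁻¹(C+C̄)ᵀρ`. -/
theorem Gfun_min {d m : ℕ} (μ : Measure (Fin d → ℝ)) [IsProbabilityMeasure μ]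
    (hμ2 : ∫⁻ x, (‖x‖₊ : ENNReal) ^ 2 ∂μ < ⊤)
    (V W : Matrix (Fin m) (Fin m) ℝ) (hV : V.PosDef) (hW : W.PosDef)
    (S T C Cb : Matrix (Fin d) (Fin m) ℝ) (ρ : Fin d → ℝ)
    (μbar : Fin d → ℝ) (hμbar : μbar = ∫ y, y ∂μ)
    (αstar : (Fin d → ℝ) → Fin m → ℝ)
    (hαstar : ∀ x, αstar x =
      -(V⁻¹ * Sᵀ).mulVec (x - μbar) - (W⁻¹ * Tᵀ).mulVec μbar
        - (1 / 2 : ℝ) • (W⁻¹ * (C + Cb)ᵀ).mulVec ρ) :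
    (∀ α : (Fin d → ℝ) → Fin m → ℝ, Measurable α →
        (∫⁻ x, (‖α x‖₊ : ENNReal) ^ 2 ∂μ < ⊤) →
        Gfun μ V W S T C Cb ρ αstar ≤ Gfun μ V W S T C Cb ρ α)
    ∧ Gfun μ V W S T C Cb ρ αstar
        = -quadVar μ (S * V⁻¹ * Sᵀ)
          - μbar ⬝ᵥ (T * W⁻¹ * Tᵀ).mulVec μbar
          - μbar ⬝ᵥ (T * W⁻¹ * (C + Cb)ᵀ).mulVec ρ
          - (1 / 4 : ℝ) * (ρ ⬝ᵥ ((C + Cb) * W⁻¹ * (C + Cb)ᵀ).mulVec ρ) := by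
  have hid2 : MemLp (fun x : Fin d → ℝ => x) 2 μ :=
    memL2_of_lintegral aestronglyMeasurable_id hμ2
  have hid1 : Integrable (fun x : Fin d → ℝ => x) μ := hid2.integrable one_le_two
  set A : Matrix (Fin m) (Fin d) ℝ := V⁻¹ * Sᵀ with hA
  set lst : Fin m → ℝ :=
    -(W⁻¹ * Tᵀ).mulVec μbar - (1 / 2 : ℝ) • (W⁻¹ * (C + Cb)ᵀ).mulVec ρ with hlst
  set bb : Fin m → ℝ := Tᵀ.mulVec μbar + (1 / 2 : ℝ) • ((C + Cb)ᵀ.mulVec ρ) with hbb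
  set Λ : Matrix (Fin d) (Fin d) ℝ := S * V⁻¹ * Sᵀ with hΛ
  have hαs_eq : αstar = fun x => -(A.mulVec (x - μbar)) + lst := by
    funext x; rw [hαstar x, hlst]; abel
  have hA_cont : Continuous fun v : Fin d → ℝ => A.mulVec v := by
    have := LinearMap.continuous_of_finiteDimensional (A.mulVecLin)
    exact this
  have hαs_cont : Continuous αstar := by
    rw [hαs_eq]
    exact ((hA_cont.comp (continuous_id.sub continuous_const)).neg).add continuous_const
  have hαs_m : Measurable αstar := hαs_cont.measurable
  have h1 : MemLp (fun x : Fin d → ℝ => A.mulVec (x - μbar)) 2 μ := by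
    exact (LinearMap.toContinuousLinearMap A.mulVecLin).comp_memLp'
      (hid2.sub (memLp_const μbar))
  have hαs2 : MemLp αstar 2 μ := by
    rw [hαs_eq]; exact h1.neg.add (memLp_const lst)
  have hxc1 : Integrable (fun x : Fin d → ℝ => x - μbar) μ :=
    (hid2.sub (memLp_const μbar)).integrable one_le_two
  have hxmb0 : ∫ x, (x - μbar) ∂μ = 0 := by
    rw [integral_sub hid1 (integrable_const _)]
    simp [hμbar]
  have hlamstar : ∫ x, αstar x ∂μ = lst := by
    simp only [hαs_eq]
    have hneg : Integrable (fun x : Fin d → ℝ => -(A.mulVec (x - μbar))) μ :=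
      (h1.integrable one_le_two).neg
    rw [integral_add hneg (integrable_const lst), integral_neg,
      integral_mulVec_comm A hxc1, hxmb0]
    simp
  -- Winv symmetry facts
  have hWdet : IsUnit W.det := (Matrix.isUnit_iff_isUnit_det W).mp hW.isUnit
  have hWsym : Wᵀ = W := by
    have := hW.1.eq; rwa [Matrix.conjTranspose_eq_transpose_of_trivial] at this
  have hWinvsym : (W⁻¹)ᵀ = W⁻¹ := by rw [Matrix.transpose_nonsing_inv, hWsym]
  have hlst_bb : lst = -(W⁻¹.mulVec bb) := by
    rw [hlst, hbb, Matrix.mulVec_add, Matrix.mulVec_smul, ← Matrix.mulVec_mulVec,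
      ← Matrix.mulVec_mulVec, neg_add]
    abel
  -- the pointwise quadratic at the minimizer
  have hcenter : ∀ x, αstar x - lst = -(V⁻¹.mulVec (Sᵀ.mulVec (x - μbar))) := by
    intro x
    rw [hαs_eq]
    simp only [add_sub_cancel_right]
    rw [Matrix.mulVec_mulVec]
  have hq_eq : ∀ x : Fin d → ℝ,
      (αstar x - lst) ⬝ᵥ V.mulVec (αstar x - lst)
        + 2 * (Sᵀ.mulVec (x - μbar) ⬝ᵥ (αstar x - lst))
      = -((x - μbar) ⬝ᵥ Λ.mulVec (x - μbar)) := by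
    intro x
    rw [hcenter x, quad_eq hV (Sᵀ.mulVec (x - μbar)), dot_sandwich S V⁻¹ S, hΛ]
  -- integral of the quadratic form
  have J1 : Integrable (fun x : Fin d → ℝ => x ⬝ᵥ Λ.mulVec x) μ := integrable_dot Λ hid2 hid2
  have hxc2 : MemLp (fun x : Fin d → ℝ => x - μbar) 2 μ := hid2.sub (memLp_const μbar)
  have Jq : Integrable (fun x : Fin d → ℝ => (x - μbar) ⬝ᵥ Λ.mulVec (x - μbar)) μ :=
    integrable_dot Λ hxc2 hxc2
  have hquad : ∫ x, (x - μbar) ⬝ᵥ Λ.mulVec (x - μbar) ∂μ = quadVar μ Λ := by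
    have hpt : (fun x : Fin d → ℝ => (x - μbar) ⬝ᵥ Λ.mulVec (x - μbar))
        = fun x => x ⬝ᵥ Λ.mulVec x - (Λ.mulVec μbar) ⬝ᵥ x - (Λᵀ.mulVec μbar) ⬝ᵥ x
            + μbar ⬝ᵥ Λ.mulVec μbar := by
      funext x
      have e1 : x ⬝ᵥ Λ.mulVec μbar = (Λ.mulVec μbar) ⬝ᵥ x := dotProduct_comm _ _
      have e2 : μbar ⬝ᵥ Λ.mulVec x = (Λᵀ.mulVec μbar) ⬝ᵥ x := dot_trans Λ μbar x
      rw [Matrix.mulVec_sub, dotProduct_sub, sub_dotProduct, sub_dotProduct, e1, e2]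
      ring
    rw [hpt]
    have K2 : Integrable (fun x : Fin d → ℝ => (Λ.mulVec μbar) ⬝ᵥ x) μ :=
      integrable_dot_const _ hid1
    have K3 : Integrable (fun x : Fin d → ℝ => (Λᵀ.mulVec μbar) ⬝ᵥ x) μ :=
      integrable_dot_const _ hid1
    have K12 : Integrable (fun x : Fin d → ℝ => x ⬝ᵥ Λ.mulVec x - (Λ.mulVec μbar) ⬝ᵥ x) μ :=
      J1.sub K2
    have K123 : Integrable (fun x : Fin d → ℝ => x ⬝ᵥ Λ.mulVec x - (Λ.mulVec μbar) ⬝ᵥ x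
        - (Λᵀ.mulVec μbar) ⬝ᵥ x) μ := K12.sub K3
    rw [integral_add K123 (integrable_const _), integral_sub K12 K3, integral_sub J1 K2,
      integral_dot_const _ hid1, integral_dot_const _ hid1]
    have e3 : (Λ.mulVec μbar) ⬝ᵥ (∫ x : Fin d → ℝ, x ∂μ) = μbar ⬝ᵥ Λ.mulVec μbar := by
      rw [← hμbar]; exact dotProduct_comm _ _
    have e4 : (Λᵀ.mulVec μbar) ⬝ᵥ (∫ x : Fin d → ℝ, x ∂μ) = μbar ⬝ᵥ Λ.mulVec μbar := by
      rw [← hμbar]; exact (dot_trans Λ μbar μbar).symm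
    rw [e3, e4]
    unfold quadVar
    rw [← hμbar]
    simp only [integral_const, measure_univ, probReal_univ, ENNReal.toReal_one, one_smul]
    ring
  -- the value at the minimizer
  have hGs : Gfun μ V W S T C Cb ρ αstar = -quadVar μ Λ + -(bb ⬝ᵥ W⁻¹.mulVec bb) := by
    rw [Gfun_decomp μ hid2 V W S T C Cb ρ hαs_m hαs2, hlamstar, ← hμbar, ← hbb]
    have hfirst : ∫ x, ((αstar x - lst) ⬝ᵥ V.mulVec (αstar x - lst)
        + 2 * (Sᵀ.mulVec (x - μbar) ⬝ᵥ (αstar x - lst))) ∂μ = -quadVar μ Λ := by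
      have : (fun x => (αstar x - lst) ⬝ᵥ V.mulVec (αstar x - lst)
          + 2 * (Sᵀ.mulVec (x - μbar) ⬝ᵥ (αstar x - lst)))
          = fun x => -((x - μbar) ⬝ᵥ Λ.mulVec (x - μbar)) := funext hq_eq
      rw [this, integral_neg, hquad]
    rw [hfirst]
    have hsecond : lst ⬝ᵥ W.mulVec lst + 2 * (bb ⬝ᵥ lst) = -(bb ⬝ᵥ W⁻¹.mulVec bb) := by
      rw [hlst_bb]; exact quad_eq hW bb
    rw [hsecond]
  -- expansion of the bb-term
  have hbb_exp : bb ⬝ᵥ W⁻¹.mulVec bb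
      = μbar ⬝ᵥ (T * W⁻¹ * Tᵀ).mulVec μbar + μbar ⬝ᵥ (T * W⁻¹ * (C + Cb)ᵀ).mulVec ρ
        + (1 / 4 : ℝ) * (ρ ⬝ᵥ ((C + Cb) * W⁻¹ * (C + Cb)ᵀ).mulVec ρ) := by
    have t11 : Tᵀ.mulVec μbar ⬝ᵥ W⁻¹.mulVec (Tᵀ.mulVec μbar)
        = μbar ⬝ᵥ (T * W⁻¹ * Tᵀ).mulVec μbar := dot_sandwich T W⁻¹ T μbar μbar
    have t12 : Tᵀ.mulVec μbar ⬝ᵥ W⁻¹.mulVec ((C + Cb)ᵀ.mulVec ρ)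
        = μbar ⬝ᵥ (T * W⁻¹ * (C + Cb)ᵀ).mulVec ρ := dot_sandwich T W⁻¹ (C + Cb) μbar ρ
    have t21 : (C + Cb)ᵀ.mulVec ρ ⬝ᵥ W⁻¹.mulVec (Tᵀ.mulVec μbar)
        = μbar ⬝ᵥ (T * W⁻¹ * (C + Cb)ᵀ).mulVec ρ := by
      rw [dot_sandwich (C + Cb) W⁻¹ T ρ μbar, dot_trans, dotProduct_comm]
      congr 1
      rw [Matrix.transpose_mul, Matrix.transpose_mul, Matrix.transpose_transpose,
        hWinvsym, Matrix.mul_assoc]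
    have t22 : (C + Cb)ᵀ.mulVec ρ ⬝ᵥ W⁻¹.mulVec ((C + Cb)ᵀ.mulVec ρ)
        = ρ ⬝ᵥ ((C + Cb) * W⁻¹ * (C + Cb)ᵀ).mulVec ρ := dot_sandwich (C + Cb) W⁻¹ (C + Cb) ρ ρ
    rw [hbb, Matrix.mulVec_add, Matrix.mulVec_smul, add_dotProduct, smul_dotProduct,
      dotProduct_add, dotProduct_add, dotProduct_smul, dotProduct_smul,
      t11, t12, t21, t22]
    simp only [smul_eq_mul]
    ring
  constructor
  · intro α hαm hαint
    have hα2 : MemLp α 2 μ := memL2_of_lintegral hαm.aestronglyMeasurable hαint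
    rw [Gfun_decomp μ hid2 V W S T C Cb ρ hαm hα2, hGs, ← hμbar, ← hbb]
    set lamα := ∫ y, α y ∂μ with hlamα
    have hβ2 : MemLp (fun x => α x - lamα) 2 μ := hα2.sub (memLp_const lamα)
    have Icross : Integrable (fun x => Sᵀ.mulVec (x - μbar) ⬝ᵥ (α x - lamα)) μ := by
      have := integrable_dot S hxc2 hβ2
      simpa only [dot_trans] using this
    have IF : Integrable (fun x => (α x - lamα) ⬝ᵥ V.mulVec (α x - lamα)
        + 2 * (Sᵀ.mulVec (x - μbar) ⬝ᵥ (α x - lamα))) μ :=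
      (integrable_dot V hβ2 hβ2).add (Icross.const_mul 2)
    have hmono : ∫ x, -((x - μbar) ⬝ᵥ Λ.mulVec (x - μbar)) ∂μ
        ≤ ∫ x, ((α x - lamα) ⬝ᵥ V.mulVec (α x - lamα)
            + 2 * (Sᵀ.mulVec (x - μbar) ⬝ᵥ (α x - lamα))) ∂μ := by
      refine integral_mono Jq.neg IF fun x => ?_
      have := quad_lower hV (Sᵀ.mulVec (x - μbar)) (α x - lamα)
      rwa [dot_sandwich S V⁻¹ S, ← hΛ] at this
    have hQ : -(bb ⬝ᵥ W⁻¹.mulVec bb) ≤ lamα ⬝ᵥ W.mulVec lamα + 2 * (bb ⬝ᵥ lamα) :=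
      quad_lower hW bb lamα
    have h1' : -quadVar μ Λ = ∫ x, -((x - μbar) ⬝ᵥ Λ.mulVec (x - μbar)) ∂μ := by
      rw [integral_neg, hquad]
    rw [h1']
    exact add_le_add hmono hQ
  · rw [hGs, hbb_exp, hΛ]
    ring
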